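/- arXiv:1402.4600 — 3 statements merged into one kernel-verified Lean document; each statement's English description precedes it below -/
import Mathlib

section
/- (Potential matrix solution of Poisson's equation) Let P be a stochastic matrix on a finite state space X, fix a state α, and define \bar{P}(x,y) = P(x,y) − 1{x = α} P(α, y). If the matrix I − \bar{P} is invertible with inverse Z, and π is the invariant probability measure of P, then for any f : X → ℝ with π(f) = 0, the function H = Z f satisfies Poisson's equation H − P H = f up to an additive constant; more precisely, H − P H = f − c·1 where c = Σ_y P(α,y) H(y). -/
/-- Potential-matrix solution of Poisson's equation:
with P̄ obtained by zeroing the α-row contribution and Z = (I − P̄)⁻¹,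
H = Zf satisfies H − PH = f − c·1 with c = Σ_y P(α,y)H(y), whenever π(f)=0. -/
theorem stmt6 {X : Type*} [Fintype X] [DecidableEq X] (P : Matrix X X ℝ)
    (hPnn : ∀ x y, 0 ≤ P x y) (hProw : ∀ x, ∑ y, P x y = 1) (α : X)
    (Pbar : Matrix X X ℝ)
    (hPbar : ∀ x y, Pbar x y = P x y - (if x = α then 1 else 0) * P α y)
    (Z : Matrix X X ℝ) (hZ1 : (1 - Pbar) * Z = 1) (hZ2 : Z * (1 - Pbar) = 1)
    (π : X → ℝ) (hπnn : ∀ x, 0 ≤ π x) (hπsum : ∑ x, π x = 1)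
    (hπinv : ∀ y, ∑ x, π x * P x y = π y)
    (f : X → ℝ) (hf : ∑ x, π x * f x = 0) :
    ∀ x, (Z.mulVec f) x - (P.mulVec (Z.mulVec f)) x
      = f x - ∑ y, P α y * (Z.mulVec f) y := by
  set H := Z.mulVec f with hH
  set c := ∑ y, P α y * H y with hc
  -- H - Pbar H = f
  have key : ∀ x, H x - Pbar.mulVec H x = f x := by
    have h : (1 - Pbar).mulVec H = f := by
      rw [hH, Matrix.mulVec_mulVec, hZ1, Matrix.one_mulVec]
    intro x
    have := congrFun h x
    rwa [Matrix.sub_mulVec, Pi.sub_apply, Matrix.one_mulVec] at this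
  -- Pbar H relates to P H
  have hPbarH : ∀ x, Pbar.mulVec H x = P.mulVec H x - (if x = α then c else 0) := by
    intro x
    simp only [Matrix.mulVec, dotProduct, hPbar, sub_mul]
    rw [Finset.sum_sub_distrib]
    by_cases hx : x = α <;> simp [hx, hc]
  -- sum PH against π equals sum H against π
  have hsum : ∑ x, π x * (P.mulVec H) x = ∑ y, π y * H y := by
    simp only [Matrix.mulVec, dotProduct, Finset.mul_sum]
    rw [Finset.sum_comm]
    refine Finset.sum_congr rfl fun y _ => ?_
    rw [show (∑ x, π x * (P x y * H y)) = (∑ x, π x * P x y) * H y by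
      rw [Finset.sum_mul]; exact Finset.sum_congr rfl fun x _ => by ring, hπinv]
  -- π α * c = 0
  have hπαc : π α * c = 0 := by
    have e1 : ∑ x, π x * (H x - Pbar.mulVec H x) = 0 := by
      rw [Finset.sum_congr rfl fun x _ => by rw [key x], hf]
    have e2 : ∑ x, π x * (H x - Pbar.mulVec H x) = π α * c := by
      have hterm : ∀ x, π x * (H x - Pbar.mulVec H x)
          = π x * H x - π x * (P.mulVec H) x + (if x = α then π x * c else 0) := by
        intro x
        rw [hPbarH x]
        by_cases hx : x = α <;> simp [hx] <;> ring
      rw [Finset.sum_congr rfl fun x _ => hterm x, Finset.sum_add_distrib,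
        Finset.sum_sub_distrib, hsum, Finset.sum_ite_eq' Finset.univ α]
      simp
    rw [e2] at e1
    exact e1
  -- π α ≠ 0
  have hπα : π α ≠ 0 := by
    intro h0
    have hv : Matrix.vecMul π (1 - Pbar) = 0 := by
      funext y
      simp only [Matrix.vecMul, dotProduct, Matrix.sub_apply, Matrix.one_apply,
        hPbar, Pi.zero_apply]
      have hterm : ∀ x, π x * ((if x = y then (1:ℝ) else 0) - (P x y - (if x = α then 1 else 0) * P α y))
          = (if x = y then π x else 0) - π x * P x y + (if x = α then π x * P α y else 0) := by
        intro x
        by_cases h1 : x = y <;> by_cases h2 : x = α <;>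
          subst_vars <;> simp_all <;> ring
      rw [Finset.sum_congr rfl fun x _ => hterm x, Finset.sum_add_distrib,
        Finset.sum_sub_distrib, Finset.sum_ite_eq' Finset.univ y,
        Finset.sum_ite_eq' Finset.univ α, hπinv y]
      simp [h0]
    have hπ0 : π = 0 := by
      have h3 : Matrix.vecMul (Matrix.vecMul π (1 - Pbar)) Z = Matrix.vecMul π 1 := by
        rw [Matrix.vecMul_vecMul, hZ1]
      rw [hv, Matrix.zero_vecMul, Matrix.vecMul_one] at h3
      exact h3.symm
    rw [hπ0] at hπsum
    simp at hπsum
  have hc0 : c = 0 := by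
    rcases mul_eq_zero.mp hπαc with h | h
    · exact absurd h hπα
    · exact h
  intro x
  have hk := key x
  rw [hPbarH x] at hk
  simp only [hc0, ite_self, sub_zero] at hk ⊢
  linarith
end

section
/- (Bounded welfare gap) Let P be stochastic on finite X and suppose h : X → ℝ, Λ ∈ ℝ and U : X → ℝ satisfy h(x) − log(Σ_y P(x,y)e^{h(y)}) = ζU(x) − Λ for all x. Then for the Markov chain (X_t) with kernel P and any horizon T ≥ 1 and initial state x₀, |T·Λ − Λ_T| ≤ ‖h‖_sp, where Λ_T = log E_{x₀}[exp(ζ Σ_{t=1}^T U(X_t))] and ‖h‖_sp = max h − min h. -/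
noncomputable def Gfun {X : Type*} [Fintype X] (P : X → X → ℝ) (ζ : ℝ) (U : X → ℝ)
    (T : ℕ) (x : X) : ℝ :=
  ∑ f : Fin T → X,
    (∏ i : Fin T, P ((Fin.cons x f : Fin (T + 1) → X) i.castSucc) (f i))
      * Real.exp (ζ * ∑ i : Fin T, U (f i))

lemma Gfun_zero {X : Type*} [Fintype X] (P : X → X → ℝ) (ζ : ℝ) (U : X → ℝ) (x : X) :
    Gfun P ζ U 0 x = 1 := by
  simp [Gfun]

lemma Gfun_succ {X : Type*} [Fintype X] (P : X → X → ℝ) (ζ : ℝ) (U : X → ℝ) (T : ℕ) (x : X) :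
    Gfun P ζ U (T+1) x = ∑ y, P x y * Real.exp (ζ * U y) * Gfun P ζ U T y := by
  rw [Gfun]
  rw [← Equiv.sum_comp (Fin.consEquiv fun _ : Fin (T+1) => X)]
  rw [Fintype.sum_prod_type]
  refine Finset.sum_congr rfl fun y _ => ?_
  rw [Gfun, Finset.mul_sum]
  refine Finset.sum_congr rfl fun f _ => ?_
  simp only [Fin.consEquiv_apply]
  rw [Fin.prod_univ_succ, Fin.sum_univ_succ]
  simp only [Fin.cons_zero, Fin.cons_succ, Fin.castSucc_zero, ← Fin.succ_castSucc]
  rw [mul_add, Real.exp_add]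
  simp only [Fin.consEquiv_apply, Fin.cons_succ]
  ring

lemma Gfun_bounds {X : Type*} [Fintype X] [Nonempty X] (P : X → X → ℝ)
    (hPnn : ∀ x y, 0 ≤ P x y) (hProw : ∀ x, ∑ y, P x y = 1)
    (ζ : ℝ) (U : X → ℝ) (h : X → ℝ) (Λ : ℝ)
    (hMPE : ∀ x, h x - Real.log (∑ y, P x y * Real.exp (h y)) = ζ * U x - Λ)
    (T : ℕ) :
    ∀ x, (∑ y, P x y * Real.exp (h y)) * Real.exp (-(Finset.univ.sup' Finset.univ_nonempty h))
        ≤ Real.exp (-(T : ℝ) * Λ) * Gfun P ζ U T x ∧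
      Real.exp (-(T : ℝ) * Λ) * Gfun P ζ U T x
        ≤ (∑ y, P x y * Real.exp (h y)) * Real.exp (-(Finset.univ.inf' Finset.univ_nonempty h)) := by
  set M := Finset.univ.sup' Finset.univ_nonempty h with hM
  set m := Finset.univ.inf' Finset.univ_nonempty h with hm
  have hmle : ∀ y, m ≤ h y := fun y => Finset.inf'_le h (Finset.mem_univ y)
  have hMge : ∀ y, h y ≤ M := fun y => Finset.le_sup' h (Finset.mem_univ y)
  have hg_lb : ∀ x, Real.exp m ≤ ∑ y, P x y * Real.exp (h y) := by
    intro x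
    calc Real.exp m = ∑ y, P x y * Real.exp m := by rw [← Finset.sum_mul, hProw, one_mul]
    _ ≤ ∑ y, P x y * Real.exp (h y) :=
      Finset.sum_le_sum fun y _ => mul_le_mul_of_nonneg_left (Real.exp_le_exp.2 (hmle y)) (hPnn x y)
  have hg_ub : ∀ x, ∑ y, P x y * Real.exp (h y) ≤ Real.exp M := by
    intro x
    calc ∑ y, P x y * Real.exp (h y) ≤ ∑ y, P x y * Real.exp M :=
      Finset.sum_le_sum fun y _ => mul_le_mul_of_nonneg_left (Real.exp_le_exp.2 (hMge y)) (hPnn x y)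
    _ = Real.exp M := by rw [← Finset.sum_mul, hProw, one_mul]
  have hg_pos : ∀ x, 0 < ∑ y, P x y * Real.exp (h y) :=
    fun x => lt_of_lt_of_le (Real.exp_pos m) (hg_lb x)
  -- key identity: exp(ζ U y - Λ) * g y = exp (h y)
  have hkey : ∀ y, Real.exp (ζ * U y - Λ) * (∑ z, P y z * Real.exp (h z)) = Real.exp (h y) := by
    intro y
    rw [← hMPE y, Real.exp_sub, Real.exp_log (hg_pos y), div_mul_cancel₀]
    exact (hg_pos y).ne'
  induction T with
  | zero =>
    intro x
    simp only [Gfun_zero, Nat.cast_zero, neg_zero, zero_mul, Real.exp_zero, mul_one, one_mul]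
    constructor
    · calc (∑ y, P x y * Real.exp (h y)) * Real.exp (-M) ≤ Real.exp M * Real.exp (-M) :=
        mul_le_mul_of_nonneg_right (hg_ub x) (Real.exp_pos _).le
      _ = 1 := by rw [← Real.exp_add]; simp
    · calc (1:ℝ) = Real.exp m * Real.exp (-m) := by rw [← Real.exp_add]; simp
      _ ≤ (∑ y, P x y * Real.exp (h y)) * Real.exp (-m) :=
        mul_le_mul_of_nonneg_right (hg_lb x) (Real.exp_pos _).le
  | succ T ih =>
    intro x
    have hrec : Real.exp (-(T+1 : ℕ) * Λ) * Gfun P ζ U (T+1) x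
        = ∑ y, P x y * (Real.exp (ζ * U y - Λ) * (Real.exp (-(T : ℝ) * Λ) * Gfun P ζ U T y)) := by
      rw [Gfun_succ, Finset.mul_sum]
      refine Finset.sum_congr rfl fun y _ => ?_
      rw [Real.exp_sub, div_eq_mul_inv, ← Real.exp_neg]
      push_cast
      rw [show (-(↑T + 1) * Λ : ℝ) = -Λ + -↑T * Λ by ring, Real.exp_add]
      ring
    constructor
    · rw [hrec]
      calc (∑ y, P x y * Real.exp (h y)) * Real.exp (-M)
          = ∑ y, P x y * (Real.exp (ζ * U y - Λ) * ((∑ z, P y z * Real.exp (h z)) * Real.exp (-M))) := by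
            rw [Finset.sum_mul]; refine Finset.sum_congr rfl fun y _ => ?_
            rw [← mul_assoc (Real.exp _), hkey y]; ring
        _ ≤ ∑ y, P x y * (Real.exp (ζ * U y - Λ) * (Real.exp (-(T : ℝ) * Λ) * Gfun P ζ U T y)) := by
            refine Finset.sum_le_sum fun y _ => ?_
            refine mul_le_mul_of_nonneg_left ?_ (hPnn x y)
            exact mul_le_mul_of_nonneg_left ((ih y).1) (Real.exp_pos _).le
    · rw [hrec]
      calc ∑ y, P x y * (Real.exp (ζ * U y - Λ) * (Real.exp (-(T : ℝ) * Λ) * Gfun P ζ U T y))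
          ≤ ∑ y, P x y * (Real.exp (ζ * U y - Λ) * ((∑ z, P y z * Real.exp (h z)) * Real.exp (-m))) := by
            refine Finset.sum_le_sum fun y _ => ?_
            refine mul_le_mul_of_nonneg_left ?_ (hPnn x y)
            exact mul_le_mul_of_nonneg_left ((ih y).2) (Real.exp_pos _).le
        _ = (∑ y, P x y * Real.exp (h y)) * Real.exp (-m) := by
            rw [Finset.sum_mul]; refine Finset.sum_congr rfl fun y _ => ?_
            rw [← mul_assoc (Real.exp _), hkey y]; ring


/-- Bounded welfare gap: if h, Λ solve the multiplicative Poisson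
equation h(x) − log Σ_y P(x,y)e^{h(y)} = ζU(x) − Λ, then for any horizon T and
initial state x₀, |TΛ − Λ_T| ≤ ‖h‖_sp, where
Λ_T = log E_{x₀}[exp(ζ Σ_{t=1}^T U(X_t))] (expressed as a sum over paths). -/
theorem stmt18 {X : Type*} [Fintype X] [Nonempty X] (P : X → X → ℝ)
    (hPnn : ∀ x y, 0 ≤ P x y) (hProw : ∀ x, ∑ y, P x y = 1)
    (ζ : ℝ) (U : X → ℝ) (h : X → ℝ) (Λ : ℝ)
    (hMPE : ∀ x, h x - Real.log (∑ y, P x y * Real.exp (h y)) = ζ * U x - Λ)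
    (T : ℕ) (hT : 1 ≤ T) (x₀ : X) :
    |(T : ℝ) * Λ -
        Real.log (∑ f : Fin T → X,
          (∏ i : Fin T, P ((Fin.cons x₀ f : Fin (T + 1) → X) i.castSucc) (f i))
            * Real.exp (ζ * ∑ i : Fin T, U (f i)))|
      ≤ (Finset.univ.sup' Finset.univ_nonempty h)
        - (Finset.univ.inf' Finset.univ_nonempty h) := by
  set M := Finset.univ.sup' Finset.univ_nonempty h with hM
  set m := Finset.univ.inf' Finset.univ_nonempty h with hm
  have hGdef : (∑ f : Fin T → X,
      (∏ i : Fin T, P ((Fin.cons x₀ f : Fin (T + 1) → X) i.castSucc) (f i))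
        * Real.exp (ζ * ∑ i : Fin T, U (f i))) = Gfun P ζ U T x₀ := rfl
  rw [hGdef]
  set G := Gfun P ζ U T x₀ with hG
  have hb := Gfun_bounds P hPnn hProw ζ U h Λ hMPE T x₀
  rw [← hM, ← hm, ← hG] at hb
  have hmle : ∀ y, m ≤ h y := fun y => Finset.inf'_le h (Finset.mem_univ y)
  have hMge : ∀ y, h y ≤ M := fun y => Finset.le_sup' h (Finset.mem_univ y)
  have hg_lb : Real.exp m ≤ ∑ y, P x₀ y * Real.exp (h y) := by
    calc Real.exp m = ∑ y, P x₀ y * Real.exp m := by rw [← Finset.sum_mul, hProw, one_mul]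
    _ ≤ ∑ y, P x₀ y * Real.exp (h y) :=
      Finset.sum_le_sum fun y _ => mul_le_mul_of_nonneg_left (Real.exp_le_exp.2 (hmle y)) (hPnn x₀ y)
  have hg_ub : ∑ y, P x₀ y * Real.exp (h y) ≤ Real.exp M := by
    calc ∑ y, P x₀ y * Real.exp (h y) ≤ ∑ y, P x₀ y * Real.exp M :=
      Finset.sum_le_sum fun y _ => mul_le_mul_of_nonneg_left (Real.exp_le_exp.2 (hMge y)) (hPnn x₀ y)
    _ = Real.exp M := by rw [← Finset.sum_mul, hProw, one_mul]
  have hlb : Real.exp (m - M) ≤ Real.exp (-(T : ℝ) * Λ) * G := by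
    refine le_trans ?_ hb.1
    rw [Real.exp_sub, div_eq_mul_inv, ← Real.exp_neg]
    exact mul_le_mul_of_nonneg_right hg_lb (Real.exp_pos _).le
  have hub : Real.exp (-(T : ℝ) * Λ) * G ≤ Real.exp (M - m) := by
    refine le_trans hb.2 ?_
    rw [Real.exp_sub, div_eq_mul_inv, ← Real.exp_neg]
    exact mul_le_mul_of_nonneg_right hg_ub (Real.exp_pos _).le
  have hpos : 0 < Real.exp (-(T : ℝ) * Λ) * G := lt_of_lt_of_le (Real.exp_pos _) hlb
  have hGpos : 0 < G := by
    have h1 := Real.exp_pos (-(T : ℝ) * Λ)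
    nlinarith
  have hlog : Real.log (Real.exp (-(T : ℝ) * Λ) * G) = -(T : ℝ) * Λ + Real.log G := by
    rw [Real.log_mul (Real.exp_pos _).ne' hGpos.ne', Real.log_exp]
  have h1 : m - M ≤ -(T : ℝ) * Λ + Real.log G := by
    have := Real.log_le_log (Real.exp_pos _) hlb
    rwa [Real.log_exp, hlog] at this
  have h2 : -(T : ℝ) * Λ + Real.log G ≤ M - m := by
    have := Real.log_le_log hpos hub
    rwa [Real.log_exp, hlog] at this
  rw [abs_le]
  constructor <;> linarith
end

section
/- (Linearization of the measure recursion) Let {P_ζ} be a family of stochastic matrices on finite X with P_ζ = P_0 + ζ E + R(ζ) where ‖R(ζ)‖ ≤ Cζ², and let π₀ be invariant for P_0. Define μ_{t+1} = μ_t P_{ζ_t} for a bounded sequence (ζ_t) with μ_0 = π₀ + Φ_0 where ‖Φ_0‖ ≤ Cδ and |ζ_t| ≤ δ. Define Φ_{t+1}ᵀ = P_0ᵀ Φ_t + B ζ_t with B_j = Σ_x π₀(x) E(x, x^j), Φ treated as a column vector. Then for each fixed t there is a constant C_t with ‖μ_t − π₀ − Φ_t‖ ≤ C_t δ² for all δ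 ∈ (0,1]. -/
/-- Linearization of the measure recursion: if P_ζ = P₀ + ζE + R(ζ)
with entrywise ‖R(ζ)‖ ≤ Cζ², π₀ invariant for P₀, |ζ_t| ≤ δ and ‖Φ₀‖ ≤ Cδ, then the
nonlinear recursion μ_{t+1} = μ_t P_{ζ_t} is tracked by the linear system
Φ_{t+1} = P₀ᵀΦ_t + Bζ_t up to an O(δ²) error: ‖μ_t − π₀ − Φ_t‖ ≤ C_t δ². -/
theorem stmt19 {X : Type*} [Fintype X] (C : ℝ) (hC : 0 ≤ C)
    (P : ℝ → X → X → ℝ) (P0 E : X → X → ℝ) (R : ℝ → X → X → ℝ)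
    (hdec : ∀ ζ x y, P ζ x y = P0 x y + ζ * E x y + R ζ x y)
    (hR : ∀ ζ x y, |R ζ x y| ≤ C * ζ ^ 2)
    (hnn : ∀ ζ x y, 0 ≤ P ζ x y) (hrow : ∀ ζ x, ∑ y, P ζ x y = 1)
    (hP0nn : ∀ x y, 0 ≤ P0 x y) (hP0row : ∀ x, ∑ y, P0 x y = 1)
    (hErow : ∀ x, ∑ y, E x y = 0)
    (π0 : X → ℝ) (hπnn : ∀ x, 0 ≤ π0 x) (hπsum : ∑ x, π0 x = 1)
    (hπinv : ∀ y, ∑ x, π0 x * P0 x y = π0 y) :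
    ∀ t : ℕ, ∃ Ct : ℝ, ∀ δ : ℝ, 0 < δ → δ ≤ 1 →
      ∀ ζs : ℕ → ℝ, (∀ s, |ζs s| ≤ δ) →
      ∀ μ Φ : ℕ → X → ℝ,
        (∀ x, |Φ 0 x| ≤ C * δ) →
        (∀ x, μ 0 x = π0 x + Φ 0 x) →
        (∀ s x, μ (s + 1) x = ∑ y, μ s y * P (ζs s) y x) →
        (∀ s x, Φ (s + 1) x = (∑ y, P0 y x * Φ s y) + (∑ y, π0 y * E y x) * ζs s) →
        ∀ x, |μ t x - π0 x - Φ t x| ≤ Ct * δ ^ 2 := by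
  classical
  obtain ⟨ME₀, hME₀⟩ := Finite.exists_le (fun p : X × X => |E p.1 p.2|)
  set ME : ℝ := max ME₀ 0 with hMEdef
  have hME : ∀ x y, |E x y| ≤ ME := fun x y =>
    le_trans (hME₀ (x, y)) (le_max_left _ _)
  have hMEnn : (0:ℝ) ≤ ME := le_max_right _ _
  set n : ℝ := (Fintype.card X : ℝ) with hndef
  have hnnn : (0:ℝ) ≤ n := Nat.cast_nonneg _
  have hπle1 : ∀ x, π0 x ≤ 1 := by
    intro x
    rw [← hπsum]
    exact Finset.single_le_sum (fun y _ => hπnn y) (Finset.mem_univ x)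
  have hPle1 : ∀ ζ x y, P ζ x y ≤ 1 := by
    intro ζ x y
    rw [← hrow ζ x]
    exact Finset.single_le_sum (fun z _ => hnn ζ x z) (Finset.mem_univ y)
  have hP0le1 : ∀ x y, P0 x y ≤ 1 := by
    intro x y
    rw [← hP0row x]
    exact Finset.single_le_sum (fun z _ => hP0nn x z) (Finset.mem_univ y)
  have key : ∀ t : ℕ, ∃ Ct Mt : ℝ, 0 ≤ Ct ∧ 0 ≤ Mt ∧
      ∀ δ : ℝ, 0 < δ → δ ≤ 1 →
      ∀ ζs : ℕ → ℝ, (∀ s, |ζs s| ≤ δ) →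
      ∀ μ Φ : ℕ → X → ℝ,
        (∀ x, |Φ 0 x| ≤ C * δ) →
        (∀ x, μ 0 x = π0 x + Φ 0 x) →
        (∀ s x, μ (s + 1) x = ∑ y, μ s y * P (ζs s) y x) →
        (∀ s x, Φ (s + 1) x = (∑ y, P0 y x * Φ s y) + (∑ y, π0 y * E y x) * ζs s) →
        (∀ x, |Φ t x| ≤ Mt * δ) ∧ (∀ x, |μ t x - π0 x - Φ t x| ≤ Ct * δ ^ 2) := by
    intro t
    induction t with
    | zero =>
      refine ⟨0, C, le_refl _, hC, ?_⟩
      intro δ hδ hδ1 ζs hζ μ Φ hΦ0 hμ0 _ _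
      refine ⟨hΦ0, fun x => ?_⟩
      rw [hμ0]
      simp
    | succ t ih =>
      obtain ⟨Ct, Mt, hCt, hMt, H⟩ := ih
      refine ⟨n * (C + Mt * ME + Mt * C + Ct), n * Mt + ME, by positivity, by positivity, ?_⟩
      intro δ hδ hδ1 ζs hζ μ Φ hΦ0 hμ0 hμrec hΦrec
      obtain ⟨hΦb, heb⟩ := H δ hδ hδ1 ζs hζ μ Φ hΦ0 hμ0 hμrec hΦrec
      have hζt := hζ t
      have hζabs := abs_le.mp (hζ t)
      have hζ2 : (ζs t) ^ 2 ≤ δ ^ 2 := by nlinarith [hζabs.1, hζabs.2]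
      constructor
      · -- Φ bound
        intro x
        rw [hΦrec]
        have hA : |∑ y, P0 y x * Φ t y| ≤ n * (Mt * δ) := by
          have hterm : ∀ y : X, |P0 y x * Φ t y| ≤ Mt * δ := by
            intro y
            rw [abs_mul, abs_of_nonneg (hP0nn y x)]
            nlinarith [mul_nonneg (sub_nonneg.mpr (hP0le1 y x)) (mul_nonneg hMt hδ.le),
              mul_nonneg (hP0nn y x) (sub_nonneg.mpr (hΦb y))]
          calc |∑ y, P0 y x * Φ t y| ≤ ∑ y, |P0 y x * Φ t y| :=
              Finset.abs_sum_le_sum_abs _ _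
            _ ≤ ∑ _y : X, Mt * δ := Finset.sum_le_sum fun y _ => hterm y
            _ = n * (Mt * δ) := by
                rw [Finset.sum_const]; simp [hndef, nsmul_eq_mul]
        have hB : |∑ y, π0 y * E y x| ≤ ME := by
          calc |∑ y, π0 y * E y x| ≤ ∑ y, |π0 y * E y x| :=
              Finset.abs_sum_le_sum_abs _ _
            _ ≤ ∑ y, π0 y * ME := by
                apply Finset.sum_le_sum
                intro y _
                rw [abs_mul, abs_of_nonneg (hπnn y)]
                exact mul_le_mul_of_nonneg_left (hME y x) (hπnn y)
            _ = ME := by rw [← Finset.sum_mul, hπsum, one_mul]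
        calc |(∑ y, P0 y x * Φ t y) + (∑ y, π0 y * E y x) * ζs t|
            ≤ |∑ y, P0 y x * Φ t y| + |∑ y, π0 y * E y x| * |ζs t| := by
              rw [← abs_mul]; exact abs_add_le _ _
          _ ≤ n * (Mt * δ) + ME * δ :=
              add_le_add hA (mul_le_mul hB hζt (abs_nonneg _) hMEnn)
          _ = (n * Mt + ME) * δ := by ring
      · -- error bound
        intro x
        have hid : μ (t + 1) x - π0 x - Φ (t + 1) x =
            ∑ y, (π0 y * R (ζs t) y x + Φ t y * (ζs t * E y x + R (ζs t) y x)
              + (μ t y - π0 y - Φ t y) * P (ζs t) y x) := by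
          rw [hμrec, hΦrec, ← hπinv x, Finset.sum_mul,
            ← Finset.sum_sub_distrib, ← Finset.sum_add_distrib, ← Finset.sum_sub_distrib]
          apply Finset.sum_congr rfl
          intro y _
          rw [hdec]
          ring
        rw [hid]
        have hterm : ∀ y : X,
            |π0 y * R (ζs t) y x + Φ t y * (ζs t * E y x + R (ζs t) y x)
              + (μ t y - π0 y - Φ t y) * P (ζs t) y x|
            ≤ (C + Mt * ME + Mt * C + Ct) * δ ^ 2 := by
          intro y
          have h1 : |π0 y * R (ζs t) y x| ≤ C * δ ^ 2 := by
            rw [abs_mul, abs_of_nonneg (hπnn y)]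
            have hr : |R (ζs t) y x| ≤ C * δ ^ 2 :=
              le_trans (hR _ _ _) (mul_le_mul_of_nonneg_left hζ2 hC)
            nlinarith [mul_nonneg (sub_nonneg.mpr (hπle1 y)) (mul_nonneg hC (sq_nonneg δ)),
              mul_nonneg (hπnn y) (sub_nonneg.mpr hr)]
          have h2 : |Φ t y * (ζs t * E y x + R (ζs t) y x)|
              ≤ (Mt * ME + Mt * C) * δ ^ 2 := by
            rw [abs_mul]
            have hz : |ζs t * E y x + R (ζs t) y x| ≤ ME * δ + C * δ := by
              have h21 : |ζs t * E y x + R (ζs t) y x|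
                  ≤ |ζs t| * |E y x| + |R (ζs t) y x| := by
                rw [← abs_mul]; exact abs_add_le _ _
              have h22 : |ζs t| * |E y x| ≤ δ * ME :=
                mul_le_mul hζt (hME y x) (abs_nonneg _) hδ.le
              have h23 : |R (ζs t) y x| ≤ C * (ζs t) ^ 2 := hR _ _ _
              nlinarith [mul_le_mul_of_nonneg_left hζ2 hC, sq_nonneg δ,
                mul_le_mul_of_nonneg_left hδ1 (mul_nonneg hC hδ.le)]
            have hΦy := hΦb y
            calc |Φ t y| * |ζs t * E y x + R (ζs t) y x|
                ≤ (Mt * δ) * (ME * δ + C * δ) :=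
                  mul_le_mul hΦy hz (abs_nonneg _) (by positivity)
              _ = (Mt * ME + Mt * C) * δ ^ 2 := by ring
          have h3 : |(μ t y - π0 y - Φ t y) * P (ζs t) y x| ≤ Ct * δ ^ 2 := by
            rw [abs_mul, abs_of_nonneg (hnn _ y x)]
            nlinarith [mul_nonneg (sub_nonneg.mpr (hPle1 (ζs t) y x))
                (mul_nonneg hCt (sq_nonneg δ)),
              mul_nonneg (hnn (ζs t) y x) (sub_nonneg.mpr (heb y))]
          calc |π0 y * R (ζs t) y x + Φ t y * (ζs t * E y x + R (ζs t) y x)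
              + (μ t y - π0 y - Φ t y) * P (ζs t) y x|
              ≤ |π0 y * R (ζs t) y x + Φ t y * (ζs t * E y x + R (ζs t) y x)|
                + |(μ t y - π0 y - Φ t y) * P (ζs t) y x| := abs_add_le _ _
            _ ≤ (|π0 y * R (ζs t) y x| + |Φ t y * (ζs t * E y x + R (ζs t) y x)|)
                + |(μ t y - π0 y - Φ t y) * P (ζs t) y x| :=
                  add_le_add_left (abs_add_le _ _) _
            _ ≤ (C * δ ^ 2 + (Mt * ME + Mt * C) * δ ^ 2) + Ct * δ ^ 2 :=
                  add_le_add (add_le_add h1 h2) h3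
            _ = (C + Mt * ME + Mt * C + Ct) * δ ^ 2 := by ring
        calc |∑ y, (π0 y * R (ζs t) y x + Φ t y * (ζs t * E y x + R (ζs t) y x)
              + (μ t y - π0 y - Φ t y) * P (ζs t) y x)|
            ≤ ∑ y, |π0 y * R (ζs t) y x + Φ t y * (ζs t * E y x + R (ζs t) y x)
              + (μ t y - π0 y - Φ t y) * P (ζs t) y x| := Finset.abs_sum_le_sum_abs _ _
          _ ≤ ∑ _y : X, (C + Mt * ME + Mt * C + Ct) * δ ^ 2 :=
              Finset.sum_le_sum fun y _ => hterm y
          _ = n * ((C + Mt * ME + Mt * C + Ct) * δ ^ 2) := by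
              rw [Finset.sum_const]; simp [hndef, nsmul_eq_mul]
          _ = n * (C + Mt * ME + Mt * C + Ct) * δ ^ 2 := by ring
  intro t
  obtain ⟨Ct, Mt, _, _, H⟩ := key t
  exact ⟨Ct, fun δ hδ hδ1 ζs hζ μ Φ a b c d =>
    (H δ hδ hδ1 ζs hζ μ Φ a b c d).2⟩
end
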